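/- arXiv:1305.4080 — 2 statements merged into one kernel-verified Lean document; each statement's English description precedes it below -/
import Mathlib

section
/- Let H be a real Hilbert space with inner product a(·,·) and norm ⟦|·|⟧, let (·,·) denote a second inner product on H with norm ‖·‖, let β ≥ 0, λ ∈ ℝ, and suppose u, w ∈ H with ‖u‖ = ‖w‖ = 1 and a(u, φ) + β (N(u), φ) = λ (u, φ) for all φ ∈ H, where N : H → H is a map with (N(u), u) well-defined. Define E(v) := (1/2) a(v,v) + (β/4) Q(v), where Q : H → ℝ satisfies Q(u) = (N(u), u) and, in the concrete GPE setting, Q(v) = ∫ |v|^4 and N(u) = |u|^2 u. Then in the concrete setting (H = H^1_0(Ω), a the elliptic form, (·,·) the L^2 inner product) the identity holds: E(w) - E(u) = (1/2) a(w-u, w-u) + (β/2)(u^2 (w-u), w-u)_{L^2} + (β/4) ∫_Ω (u^4 - 2 u^2 w^2 + w^4) dx - (λ/2) ‖w - u‖_{L^2}^2. -/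
open MeasureTheory

/-- Energy difference identity (24) for the Gross–Pitaevskii functional:
`E(w) - E(u) = ½ a(w-u,w-u) + (β/2)(u²(w-u), w-u) + (β/4)∫(u⁴-2u²w²+w⁴) - (λ/2)‖w-u‖²`
for the ground state `u` and any `L²`-normalized `w`. -/
theorem gpe_energy_difference_identity
    (d : ℕ) (hd : d ≤ 3)
    (Ω : Set (EuclideanSpace ℝ (Fin d))) (hΩo : IsOpen Ω)
    (hΩb : Bornology.IsBounded Ω)
    (a : (EuclideanSpace ℝ (Fin d) → ℝ) →ₗ[ℝ] (EuclideanSpace ℝ (Fin d) → ℝ) →ₗ[ℝ] ℝ)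
    (hsymm : ∀ v v', a v v' = a v' v)
    (β lam : ℝ) (hβ : 0 ≤ β)
    (u w : EuclideanSpace ℝ (Fin d) → ℝ)
    (hInt : ∀ i j : ℕ, i + j ≤ 4 →
      Integrable (fun x => u x ^ i * w x ^ j) (volume.restrict Ω))
    (hunorm : (∫ x in Ω, u x ^ 2) = 1) (hwnorm : (∫ x in Ω, w x ^ 2) = 1)
    (hEL : ∀ φ : EuclideanSpace ℝ (Fin d) → ℝ,
      Integrable (fun x => u x ^ 3 * φ x) (volume.restrict Ω) →
      Integrable (fun x => u x * φ x) (volume.restrict Ω) →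
      a u φ + β * ∫ x in Ω, u x ^ 3 * φ x = lam * ∫ x in Ω, u x * φ x)
    (E : (EuclideanSpace ℝ (Fin d) → ℝ) → ℝ)
    (hE : ∀ v, E v = 1 / 2 * a v v + β / 4 * ∫ x in Ω, v x ^ 4) :
    E w - E u =
      1 / 2 * a (w - u) (w - u) +
        β / 2 * (∫ x in Ω, u x ^ 2 * (w x - u x) ^ 2) +
          β / 4 * (∫ x in Ω, (u x ^ 4 - 2 * u x ^ 2 * w x ^ 2 + w x ^ 4)) -
            lam / 2 * (∫ x in Ω, (w x - u x) ^ 2) := by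
  have h40 : Integrable (fun x => u x ^ 4) (volume.restrict Ω) := by
    simpa using hInt 4 0 (by norm_num)
  have h04 : Integrable (fun x => w x ^ 4) (volume.restrict Ω) := by
    simpa using hInt 0 4 (by norm_num)
  have h22 : Integrable (fun x => u x ^ 2 * w x ^ 2) (volume.restrict Ω) :=
    hInt 2 2 (by norm_num)
  have h31 : Integrable (fun x => u x ^ 3 * w x) (volume.restrict Ω) := by
    simpa using hInt 3 1 (by norm_num)
  have h11 : Integrable (fun x => u x * w x) (volume.restrict Ω) := by
    simpa using hInt 1 1 (by norm_num)
  have h20 : Integrable (fun x => u x ^ 2) (volume.restrict Ω) := by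
    simpa using hInt 2 0 (by norm_num)
  have h02 : Integrable (fun x => w x ^ 2) (volume.restrict Ω) := by
    simpa using hInt 0 2 (by norm_num)
  -- Euler–Lagrange with φ = w - u
  have hel : a u (w - u) + β * ((∫ x in Ω, u x ^ 3 * w x) - ∫ x in Ω, u x ^ 4)
      = lam * ((∫ x in Ω, u x * w x) - ∫ x in Ω, u x ^ 2) := by
    have i1 : Integrable (fun x => u x ^ 3 * (w - u) x) (volume.restrict Ω) :=
      (h31.sub h40).congr (Filter.Eventually.of_forall fun x => by
        simp only [Pi.sub_apply]; ring)
    have i2 : Integrable (fun x => u x * (w - u) x) (volume.restrict Ω) :=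
      (h11.sub h20).congr (Filter.Eventually.of_forall fun x => by
        simp only [Pi.sub_apply]; ring)
    have := hEL (w - u) i1 i2
    have e1 : (∫ x in Ω, u x ^ 3 * (w - u) x)
        = (∫ x in Ω, u x ^ 3 * w x) - ∫ x in Ω, u x ^ 4 := by
      rw [← integral_sub h31 h40]
      exact integral_congr_ae (Filter.Eventually.of_forall fun x => by
        simp only [Pi.sub_apply]; ring)
    have e2 : (∫ x in Ω, u x * (w - u) x)
        = (∫ x in Ω, u x * w x) - ∫ x in Ω, u x ^ 2 := by
      rw [← integral_sub h11 h20]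
      exact integral_congr_ae (Filter.Eventually.of_forall fun x => by
        simp only [Pi.sub_apply]; ring)
    rw [e1, e2] at this
    exact this
  have e3 : (∫ x in Ω, u x ^ 2 * (w x - u x) ^ 2)
      = (∫ x in Ω, u x ^ 2 * w x ^ 2) - (2 * (∫ x in Ω, u x ^ 3 * w x)
        - ∫ x in Ω, u x ^ 4) := by
    have hg1 : Integrable (fun x => 2 * (u x ^ 3 * w x)) (volume.restrict Ω) :=
      h31.const_mul 2
    have hg : Integrable (fun x => 2 * (u x ^ 3 * w x) - u x ^ 4)
        (volume.restrict Ω) := hg1.sub h40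
    have key : (∫ x in Ω, (u x ^ 2 * w x ^ 2 - (2 * (u x ^ 3 * w x) - u x ^ 4)))
        = (∫ x in Ω, u x ^ 2 * w x ^ 2) - (2 * (∫ x in Ω, u x ^ 3 * w x)
          - ∫ x in Ω, u x ^ 4) := by
      rw [integral_sub h22 hg, integral_sub hg1 h40, integral_const_mul]
    rw [← key]
    exact integral_congr_ae (Filter.Eventually.of_forall fun x => by ring)
  have e4 : (∫ x in Ω, (u x ^ 4 - 2 * u x ^ 2 * w x ^ 2 + w x ^ 4))
      = ((∫ x in Ω, u x ^ 4) - 2 * (∫ x in Ω, u x ^ 2 * w x ^ 2))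
        + ∫ x in Ω, w x ^ 4 := by
    have hg1 : Integrable (fun x => 2 * (u x ^ 2 * w x ^ 2)) (volume.restrict Ω) :=
      h22.const_mul 2
    have hg : Integrable (fun x => u x ^ 4 - 2 * (u x ^ 2 * w x ^ 2))
        (volume.restrict Ω) := h40.sub hg1
    have key : (∫ x in Ω, ((u x ^ 4 - 2 * (u x ^ 2 * w x ^ 2)) + w x ^ 4))
        = ((∫ x in Ω, u x ^ 4) - 2 * (∫ x in Ω, u x ^ 2 * w x ^ 2))
          + ∫ x in Ω, w x ^ 4 := by
      rw [integral_add hg h04, integral_sub h40 hg1, integral_const_mul]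
    rw [← key]
    exact integral_congr_ae (Filter.Eventually.of_forall fun x => by ring)
  have e5 : (∫ x in Ω, (w x - u x) ^ 2)
      = ((∫ x in Ω, w x ^ 2) - 2 * (∫ x in Ω, u x * w x)) + ∫ x in Ω, u x ^ 2 := by
    have hg1 : Integrable (fun x => 2 * (u x * w x)) (volume.restrict Ω) :=
      h11.const_mul 2
    have hg : Integrable (fun x => w x ^ 2 - 2 * (u x * w x))
        (volume.restrict Ω) := h02.sub hg1
    have key : (∫ x in Ω, ((w x ^ 2 - 2 * (u x * w x)) + u x ^ 2))
        = ((∫ x in Ω, w x ^ 2) - 2 * (∫ x in Ω, u x * w x)) + ∫ x in Ω, u x ^ 2 := by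
      rw [integral_add hg h20, integral_sub h02 hg1, integral_const_mul]
    rw [← key]
    exact integral_congr_ae (Filter.Eventually.of_forall fun x => by ring)
  have ha : a (w - u) (w - u) = a w w - a u w - a u w + a u u := by
    simp only [map_sub, LinearMap.sub_apply]
    rw [hsymm w u]
    ring
  have ha2 : a u (w - u) = a u w - a u u := by
    simp only [map_sub]
  rw [hE w, hE u, ha, e3, e4, e5, hunorm, hwnorm]
  rw [ha2] at hel
  linear_combination hel - lam * hunorm
end

section
/- Let H be a real Hilbert space with inner products a(·,·) and (·,·)_{L^2}, and let I : H → H be a linear map with I ∘ I = I (a projection-type interpolation) satisfying the estimate ‖v − I v‖_{L^2} ≤ C H ⟦|v|⟧ for all v ∈ H, where ⟦|v|⟧ = √(a(v,v)). Let V_c, V_f ⊂ H be subspaces with I v_f = 0 for all v_f ∈ V_f and (v_H, v_f)_{L^2} = 0 for all v_H in the range of I and v_f ∈ V_f. Then for all v_c ∈ V_c ⊂ H and v_f ∈ V_f: (v_c, v_f)_{L^2} = (v_c − I v_c, v_f − I v_f)_{L^2} ≤ C^2 H^2 ⟦|v_c|⟧ ⟦|v_f|⟧. -/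
lemma cauchy_schwarz_aux {V : Type*} [AddCommGroup V] [Module ℝ V]
    (b : V →ₗ[ℝ] V →ₗ[ℝ] ℝ)
    (hbsymm : ∀ v w, b v w = b w v)
    (hbnonneg : ∀ v, 0 ≤ b v v) (x y : V) :
    b x y ≤ Real.sqrt (b x x) * Real.sqrt (b y y) := by
  have key : ∀ t : ℝ, 0 ≤ b y y * (t * t) + (2 * b x y) * t + b x x := by
    intro t
    have h := hbnonneg (x + t • y)
    simp only [map_add, map_smul, LinearMap.add_apply, LinearMap.smul_apply,
      smul_eq_mul] at h
    have hs : b y x = b x y := hbsymm y x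
    rw [hs] at h
    linarith [h]
  have hd := discrim_le_zero key
  have hsq : (b x y) ^ 2 ≤ b x x * b y y := by
    unfold discrim at hd; nlinarith
  calc b x y ≤ |b x y| := le_abs_self _
    _ = Real.sqrt ((b x y) ^ 2) := (Real.sqrt_sq_eq_abs _).symm
    _ ≤ Real.sqrt (b x x * b y y) := Real.sqrt_le_sqrt hsq
    _ = Real.sqrt (b x x) * Real.sqrt (b y y) :=
        Real.sqrt_mul (hbnonneg x) _

/-- Abstract `L²`-quasi-orthogonality (estimate (16)): if the interpolation `I`
vanishes on `V_f`, its range is `b`-orthogonal to `V_f`, and the interpolation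
error bound `‖v − Iv‖_b ≤ C·H·⟦|v|⟧` holds (with `⟦|v|⟧ = √(a(v,v))`), then
`b(v_c, v_f) = b(v_c − I v_c, v_f − I v_f) ≤ C²H²⟦|v_c|⟧⟦|v_f|⟧`. -/
theorem quasi_orthogonality
    {V : Type*} [AddCommGroup V] [Module ℝ V]
    (a b : V →ₗ[ℝ] V →ₗ[ℝ] ℝ)
    (hbsymm : ∀ v w, b v w = b w v)
    (hbnonneg : ∀ v, 0 ≤ b v v)
    (hanonneg : ∀ v, 0 ≤ a v v)
    (C HH : ℝ) (hC : 0 ≤ C) (hH : 0 ≤ HH)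
    (I : V →ₗ[ℝ] V) (hIproj : ∀ v, I (I v) = I v)
    (hIerr : ∀ v, Real.sqrt (b (v - I v) (v - I v)) ≤ C * HH * Real.sqrt (a v v))
    (Vc Vf : Submodule ℝ V)
    (hker : ∀ vf ∈ Vf, I vf = 0)
    (horth : ∀ (v : V), ∀ vf ∈ Vf, b (I v) vf = 0) :
    ∀ vc ∈ Vc, ∀ vf ∈ Vf,
      b vc vf = b (vc - I vc) (vf - I vf) ∧
        b vc vf ≤ C ^ 2 * HH ^ 2 * Real.sqrt (a vc vc) * Real.sqrt (a vf vf) := by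
  intro vc hvc vf hvf
  have hIvf : I vf = 0 := hker vf hvf
  have heq : b vc vf = b (vc - I vc) (vf - I vf) := by
    rw [hIvf, sub_zero]
    have h1 : b (I vc) vf = 0 := horth vc vf hvf
    simp only [map_sub, LinearMap.sub_apply, h1, sub_zero]
  refine ⟨heq, ?_⟩
  rw [heq]
  have hcs := cauchy_schwarz_aux b hbsymm hbnonneg (vc - I vc) (vf - I vf)
  have h1 := hIerr vc
  have h2 := hIerr vf
  have hnn1 : 0 ≤ Real.sqrt (b (vc - I vc) (vc - I vc)) := Real.sqrt_nonneg _
  have hnn2 : 0 ≤ Real.sqrt (b (vf - I vf) (vf - I vf)) := Real.sqrt_nonneg _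
  have hnn3 : 0 ≤ Real.sqrt (a vc vc) := Real.sqrt_nonneg _
  have hnn4 : 0 ≤ Real.sqrt (a vf vf) := Real.sqrt_nonneg _
  calc b (vc - I vc) (vf - I vf)
      ≤ Real.sqrt (b (vc - I vc) (vc - I vc)) * Real.sqrt (b (vf - I vf) (vf - I vf)) := hcs
    _ ≤ (C * HH * Real.sqrt (a vc vc)) * (C * HH * Real.sqrt (a vf vf)) := by
        apply mul_le_mul h1 h2 hnn2 (by positivity)
    _ = C ^ 2 * HH ^ 2 * Real.sqrt (a vc vc) * Real.sqrt (a vf vf) := by ring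
end
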